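/- Let V : ℝⁿ → ℝ be three times continuously differentiable, let β ∈ ℝ, let x₀, v₀ ∈ ℝⁿ, and let q be a solution of q''(t) = −∇V(q(t)) on a neighborhood of 0 with q(0) = x₀, q'(0) = v₀. For h > 0 small enough that the matrices below are invertible, define a₀(h) = −(I + β h² Hess V(x₀))⁻¹ ∇V(x₀), x₁(h) = x₀ + h v₀ + ½ h² a₀(h), a₁(h) = −(I + β h² Hess V(x₁(h)))⁻¹ ∇V(x₁(h)), and v₁(h) = v₀ + ½ h (a₀(h) + a₁(h)). Then there exist C > 0 and h₀ > 0 such that for all h ∈ (0, h₀], ‖q(h) − x₁(h)‖ ≤ C h³ and ‖q'(h) − v₁(h)‖ ≤ C h³; i.e., the SyLiPN integrator has a third-order local error. -/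

import Mathlib

open Matrix
open Set

section Helpers

lemma taylor2_bound' {E : Type*} [NormedAddCommGroup E] [NormedSpace ℝ E]
    (f f' f'' : ℝ → E) (δ : ℝ) (hδ : 0 < δ)
    (hf : ContDiffOn ℝ 3 f (Icc 0 δ))
    (hf' : ∀ t ∈ Icc (0:ℝ) δ, HasDerivAt f (f' t) t)
    (hf'' : ∀ t ∈ Icc (0:ℝ) δ, HasDerivAt f' (f'' t) t) :
    ∃ K, 0 ≤ K ∧ ∀ h ∈ Icc (0:ℝ) δ,
      ‖f h - (f 0 + h • f' 0 + (h ^ 2 / 2) • f'' 0)‖ ≤ K * h ^ 3 := by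
  set S := Icc (0:ℝ) δ with hS
  have hud : UniqueDiffOn ℝ S := uniqueDiffOn_Icc hδ
  have h0S : (0:ℝ) ∈ S := ⟨le_rfl, hδ.le⟩
  have hcont : ContinuousOn (iteratedDerivWithin 3 f S) S :=
    hf.continuousOn_iteratedDerivWithin le_rfl hud
  obtain ⟨C, hC⟩ := isCompact_Icc.exists_bound_of_continuousOn hcont
  have hd1 : ∀ y ∈ S, derivWithin f S y = f' y := fun y hy =>
    ((hf' y hy).hasDerivWithinAt).derivWithin (hud y hy)
  have hi1 : iteratedDerivWithin 1 f S 0 = f' 0 := by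
    rw [iteratedDerivWithin_one]; exact hd1 0 h0S
  have hi2 : iteratedDerivWithin 2 f S 0 = f'' 0 := by
    rw [show (2:ℕ) = 1 + 1 from rfl, iteratedDerivWithin_succ]
    have : derivWithin (iteratedDerivWithin 1 f S) S 0 = derivWithin f' S 0 := by
      apply derivWithin_congr
      · intro y hy
        rw [iteratedDerivWithin_one]; exact hd1 y hy
      · exact hi1
    rw [this]
    exact ((hf'' 0 h0S).hasDerivWithinAt).derivWithin (hud 0 h0S)
  have htay : ∀ x : ℝ, taylorWithinEval f 2 S 0 x
      = f 0 + x • f' 0 + (x ^ 2 / 2) • f'' 0 := by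
    intro x
    rw [taylor_within_apply]
    simp [Finset.sum_range_succ, iteratedDerivWithin_zero, hi1, hi2]
    ring_nf
  have hC0 : 0 ≤ C := le_trans (norm_nonneg _) (hC 0 h0S)
  refine ⟨C / 2, by linarith, fun h hh => ?_⟩
  have := taylor_mean_remainder_bound (n := 2) hδ.le (by exact_mod_cast hf) hh
    (fun y hy => hC y hy)
  rw [htay] at this
  calc ‖f h - (f 0 + h • f' 0 + (h ^ 2 / 2) • f'' 0)‖ ≤ C * (h - 0) ^ 3 / 2 := by
        simpa [Nat.factorial] using this
    _ = C / 2 * h ^ 3 := by ring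

lemma contOn_mulVec' {m : ℕ} {s : Set ℝ} (A : ℝ → Matrix (Fin m) (Fin m) ℝ)
    (v : ℝ → Fin m → ℝ) (hA : ContinuousOn A s) (hv : ContinuousOn v s) :
    ContinuousOn (fun h => (A h).mulVec (v h)) s := by
  refine continuousOn_pi.2 fun i => ?_
  simp only [Matrix.mulVec, dotProduct]
  exact continuousOn_finset_sum _ fun j _ =>
    ((continuous_apply_apply i j).comp_continuousOn hA).mul
      ((continuous_apply j).comp_continuousOn hv)

lemma inv_block' {m : ℕ} (δin : ℝ) (hδin : 0 < δin)
    (M : ℝ → Matrix (Fin m) (Fin m) ℝ) (hM : ContinuousOn M (Set.Icc 0 δin))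
    (hM0 : M 0 = 1) (w : ℝ → Fin m → ℝ) (hw : ContinuousOn w (Set.Icc 0 δin)) :
    ∃ δ : ℝ, 0 < δ ∧ δ ≤ δin ∧ ∃ K : ℝ, 0 ≤ K ∧
      (∀ h ∈ Set.Icc (0:ℝ) δ, IsUnit (M h) ∧ ‖(M h)⁻¹.mulVec (w h)‖ ≤ K) ∧
      ContinuousOn (fun h => (M h)⁻¹.mulVec (w h)) (Set.Icc 0 δ) := by
  have h0in : (0:ℝ) ∈ Icc (0:ℝ) δin := ⟨le_rfl, hδin.le⟩
  have hdetc : ContinuousOn (fun h => (M h).det) (Icc 0 δin) :=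
    (continuous_id.matrix_det).comp_continuousOn hM
  have hdet0 : (M 0).det = 1 := by rw [hM0]; simp
  have hev : ∀ᶠ h in nhdsWithin 0 (Icc (0:ℝ) δin), 0 < (M h).det :=
    (hdetc 0 h0in).eventually
      (eventually_gt_nhds (by rw [hdet0]; norm_num : (0:ℝ) < (M 0).det))
  rw [Filter.eventually_iff, Metric.mem_nhdsWithin_iff] at hev
  obtain ⟨ε, hε, hsub⟩ := hev
  set δ := min (ε/2) δin with hδdef
  have hδpos : 0 < δ := lt_min (by linarith) hδin
  have hδle : δ ≤ δin := min_le_right _ _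
  have hIccsub : Icc (0:ℝ) δ ⊆ Metric.ball (0:ℝ) ε ∩ Icc 0 δin := by
    intro h hh
    refine ⟨?_, ⟨hh.1, hh.2.trans hδle⟩⟩
    rw [Metric.mem_ball, Real.dist_eq, sub_zero, abs_of_nonneg hh.1]
    exact lt_of_le_of_lt (hh.2.trans (min_le_left _ _)) (by linarith)
  have hdpos : ∀ h ∈ Icc (0:ℝ) δ, 0 < (M h).det := fun h hh => hsub (hIccsub hh)
  have hunit : ∀ h ∈ Icc (0:ℝ) δ, IsUnit (M h) := fun h hh =>
    (Matrix.isUnit_iff_isUnit_det _).2 (isUnit_iff_ne_zero.2 (ne_of_gt (hdpos h hh)))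
  have hrep : ∀ h : ℝ, (M h)⁻¹.mulVec (w h)
      = ((M h).det)⁻¹ • ((M h).adjugate.mulVec (w h)) := by
    intro h
    rw [Matrix.inv_def, Ring.inverse_eq_inv', Matrix.smul_mulVec]
  have hFc : ContinuousOn (fun h => ((M h).det)⁻¹ • ((M h).adjugate.mulVec (w h)))
      (Icc (0:ℝ) δ) := by
    have h1 : ContinuousOn (fun h => ((M h).det)⁻¹) (Icc 0 δ) :=
      (hdetc.mono (Icc_subset_Icc_right hδle)).inv₀
        (fun h hh => ne_of_gt (hdpos h hh))
    have h2 : ContinuousOn (fun h => (M h).adjugate.mulVec (w h)) (Icc 0 δ) :=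
      contOn_mulVec' _ _
        ((continuous_id.matrix_adjugate).comp_continuousOn
          (hM.mono (Icc_subset_Icc_right hδle)))
        (hw.mono (Icc_subset_Icc_right hδle))
    exact h1.smul h2
  obtain ⟨C, hC⟩ := isCompact_Icc.exists_bound_of_continuousOn hFc
  refine ⟨δ, hδpos, hδle, max C 0, le_max_right _ _, fun h hh => ⟨hunit h hh, ?_⟩, ?_⟩
  · rw [hrep]; exact le_trans (hC h hh) (le_max_left _ _)
  · exact ContinuousOn.congr hFc (fun h hh => hrep h)

lemma quad_bound' {E F : Type*} [NormedAddCommGroup E] [NormedSpace ℝ E]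
    [NormedAddCommGroup F] [NormedSpace ℝ F]
    (g : E → F) (hg : ContDiff ℝ 2 g) (x₀ : E) :
    ∃ r : ℝ, 0 < r ∧ ∃ K : ℝ, 0 ≤ K ∧ ∀ y : E, ‖y - x₀‖ ≤ r →
      ‖g y - g x₀ - fderiv ℝ g x₀ (y - x₀)‖ ≤ K * ‖y - x₀‖ ^ 2 := by
  have hdg : ContDiffAt ℝ 1 (fderiv ℝ g) x₀ :=
    (hg.fderiv_right (by norm_num)).contDiffAt
  obtain ⟨L, t, ht, hlip⟩ := hdg.exists_lipschitzOnWith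
  obtain ⟨ε, hε, hball⟩ := Metric.mem_nhds_iff.1 ht
  refine ⟨ε/2, by linarith, L, L.coe_nonneg, fun y hy => ?_⟩
  set ρ := ‖y - x₀‖ with hρ
  have hρ0 : 0 ≤ ρ := norm_nonneg _
  set s := Metric.closedBall x₀ ρ with hs
  have hst : s ⊆ t := fun z hz => hball (by
    rw [Metric.mem_ball]
    rw [Metric.mem_closedBall] at hz
    exact lt_of_le_of_lt (hz.trans hy) (by linarith))
  have hgd : Differentiable ℝ g := hg.differentiable (by norm_num)
  have hφ : ∀ z ∈ s, HasFDerivWithinAt (fun z => g z - fderiv ℝ g x₀ z)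
      (fderiv ℝ g z - fderiv ℝ g x₀) s z := fun z _ =>
    ((hgd z).hasFDerivAt.sub (fderiv ℝ g x₀).hasFDerivAt).hasFDerivWithinAt
  have hbound : ∀ z ∈ s, ‖fderiv ℝ g z - fderiv ℝ g x₀‖ ≤ (L : ℝ) * ρ := by
    intro z hz
    have hx₀t : x₀ ∈ t := hball (Metric.mem_ball_self hε)
    have h1 := hlip.dist_le_mul z (hst hz) x₀ hx₀t
    rw [dist_eq_norm] at h1
    refine h1.trans ?_
    have h2 : dist z x₀ ≤ ρ := Metric.mem_closedBall.1 hz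
    nlinarith [L.coe_nonneg]
  have hx₀s : x₀ ∈ s := Metric.mem_closedBall_self hρ0
  have hys : y ∈ s := by rw [Metric.mem_closedBall, dist_eq_norm]
  have := (convex_closedBall x₀ ρ).norm_image_sub_le_of_norm_hasFDerivWithin_le
    hφ hbound hx₀s hys
  calc ‖g y - g x₀ - fderiv ℝ g x₀ (y - x₀)‖
      = ‖(g y - fderiv ℝ g x₀ y) - (g x₀ - fderiv ℝ g x₀ x₀)‖ := by
        rw [map_sub]; congr 1; abel
    _ ≤ (L : ℝ) * ρ * ‖y - x₀‖ := this
    _ = (L : ℝ) * ‖y - x₀‖ ^ 2 := by rw [hρ]; ring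

lemma inv_identity' {m : ℕ} (c : ℝ) (H : Matrix (Fin m) (Fin m) ℝ) (g : Fin m → ℝ)
    (hu : IsUnit ((1 : Matrix (Fin m) (Fin m) ℝ) + c • H)) :
    -(((1 : Matrix (Fin m) (Fin m) ℝ) + c • H)⁻¹.mulVec g) + g
      = c • ((((1 : Matrix (Fin m) (Fin m) ℝ) + c • H)⁻¹).mulVec (H.mulVec g)) := by
  set A := (1 : Matrix (Fin m) (Fin m) ℝ) + c • H with hA
  have hdet : IsUnit A.det := (Matrix.isUnit_iff_isUnit_det _).1 hu
  have h1 : A.mulVec g = g + c • (H.mulVec g) := by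
    rw [hA, Matrix.add_mulVec, Matrix.one_mulVec, Matrix.smul_mulVec]
  have h2 : A⁻¹.mulVec (A.mulVec g) = g := by
    rw [Matrix.mulVec_mulVec, Matrix.nonsing_inv_mul _ hdet, Matrix.one_mulVec]
  calc -(A⁻¹.mulVec g) + g
      = A⁻¹.mulVec (A.mulVec g) - A⁻¹.mulVec g := by rw [h2]; abel
    _ = A⁻¹.mulVec (A.mulVec g - g) := by rw [Matrix.mulVec_sub]
    _ = A⁻¹.mulVec (c • (H.mulVec g)) := by rw [h1, add_sub_cancel_left]
    _ = c • (A⁻¹.mulVec (H.mulVec g)) := by rw [Matrix.mulVec_smul]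

end Helpers

/-- Third-order local error of the SyLiPN integrator (unit mass)
`a_k = −(I + β h² Hess V(x_k))⁻¹ ∇V(x_k)`, `x_{k+1} = x_k + h v_k + ½ h² a_k`,
`v_{k+1} = v_k + ½ h (a_k + a_{k+1})` for the Newtonian dynamics `q'' = −∇V(q)`,
where `V` is `C³` and `Hess V` is the Hessian matrix of `V`. -/
theorem stmt_7 (n : ℕ) (V : (Fin n → ℝ) → ℝ) (hV : ContDiff ℝ 3 V) (β : ℝ)
    (x₀ v₀ : Fin n → ℝ)
    -- the gradient of V: the vector of partial derivatives
    (gradV : (Fin n → ℝ) → (Fin n → ℝ))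
    (hgrad : ∀ y i, gradV y i = fderiv ℝ V y (Pi.single i 1))
    -- the Hessian matrix of V
    (hessV : (Fin n → ℝ) → Matrix (Fin n) (Fin n) ℝ)
    (hhess : ∀ y i j, hessV y i j =
      fderiv ℝ (fun z => fderiv ℝ V z (Pi.single j 1)) y (Pi.single i 1))
    -- q is a solution of q'' = −∇V(q) on a neighborhood (−T, T) of 0,
    -- with derivative q' and initial data (x₀, v₀)
    (T : ℝ) (hT : 0 < T) (q q' : ℝ → (Fin n → ℝ))
    (hq : ∀ t ∈ Set.Ioo (-T) T, HasDerivAt q (q' t) t)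
    (hq' : ∀ t ∈ Set.Ioo (-T) T, HasDerivAt q' (-(gradV (q t))) t)
    (hq0 : q 0 = x₀) (hq'0 : q' 0 = v₀) :
    -- the one-step update of the SyLiPN integrator, as a function of the timestep h
    let a₀ : ℝ → (Fin n → ℝ) := fun h =>
      -(((1 : Matrix (Fin n) (Fin n) ℝ) + (β * h ^ 2) • hessV x₀)⁻¹.mulVec
        (gradV x₀))
    let x₁ : ℝ → (Fin n → ℝ) := fun h => x₀ + h • v₀ + (h ^ 2 / 2) • a₀ h
    let a₁ : ℝ → (Fin n → ℝ) := fun h =>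
      -(((1 : Matrix (Fin n) (Fin n) ℝ) + (β * h ^ 2) • hessV (x₁ h))⁻¹.mulVec
        (gradV (x₁ h)))
    let v₁ : ℝ → (Fin n → ℝ) := fun h => v₀ + (h / 2) • (a₀ h + a₁ h)
    ∃ C > (0 : ℝ), ∃ h₀ > (0 : ℝ), ∀ h : ℝ, 0 < h → h ≤ h₀ →
      IsUnit ((1 : Matrix (Fin n) (Fin n) ℝ) + (β * h ^ 2) • hessV x₀) ∧
      IsUnit ((1 : Matrix (Fin n) (Fin n) ℝ) + (β * h ^ 2) • hessV (x₁ h)) ∧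
      ‖q h - x₁ h‖ ≤ C * h ^ 3 ∧ ‖q' h - v₁ h‖ ≤ C * h ^ 3 := by
  intro a₀ x₁ a₁ v₁
  classical
  -- gradient smoothness
  have hge : gradV = fun y => fun i => (fderiv ℝ V y) (Pi.single i 1) := by
    funext y i; exact hgrad y i
  have hdV : ContDiff ℝ 2 (fderiv ℝ V) := hV.fderiv_right (by norm_num)
  have hg2 : ContDiff ℝ 2 gradV := by
    rw [hge]; exact contDiff_pi.2 fun i => hdV.clm_apply contDiff_const
  -- fderiv of gradV is the Hessian (by symmetry of second derivatives)
  have hDg : ∀ x w, fderiv ℝ gradV x w = (hessV x).mulVec w := by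
    intro x w
    have hsymm : IsSymmSndFDerivAt ℝ V x := hV.contDiffAt.isSymmSndFDerivAt (by norm_num)
    have hdiffc : ∀ u : Fin n → ℝ, DifferentiableAt ℝ (fun y => fderiv ℝ V y u) x :=
      fun u => (hdV.differentiable (by norm_num) x).clm_apply (differentiableAt_const u)
    have key : ∀ u v : Fin n → ℝ,
        fderiv ℝ (fun y => fderiv ℝ V y u) x v = (fderiv ℝ (fderiv ℝ V) x v) u := by
      intro u v
      rw [fderiv_clm_apply (hdV.differentiable (by norm_num) x) (differentiableAt_const u)]
      simp
    funext i
    have h1 : fderiv ℝ gradV x w i = fderiv ℝ (fun y => gradV y i) x w := by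
      rw [hge, fderiv_pi (fun i => by simpa using hdiffc (Pi.single i 1))]
      rfl
    rw [h1]
    have h2 : (fun y => gradV y i) = fun y => fderiv ℝ V y (Pi.single i 1) := by
      funext y; exact hgrad y i
    rw [h2, key]
    have hsym' : (fderiv ℝ (fderiv ℝ V) x w) (Pi.single i 1)
        = (fderiv ℝ (fderiv ℝ V) x (Pi.single i 1)) w := hsymm w (Pi.single i 1)
    rw [hsym']
    have hw : w = ∑ j, w j • (Pi.single j 1 : Fin n → ℝ) := by
      funext k; simp [Pi.single_apply, Finset.sum_apply, eq_comm]
    conv_lhs => rw [hw]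
    rw [map_sum]
    simp only [_root_.map_smul]
    rw [Matrix.mulVec]
    simp only [dotProduct]
    congr 1
    funext j
    rw [hhess x i j, ← key]
    simp [mul_comm]
  -- continuity of the Hessian
  have hentry : ∀ x i j, hessV x i j = fderiv ℝ gradV x (Pi.single j 1) i := by
    intro x i j
    rw [hDg]
    simp [Matrix.mulVec, dotProduct, Pi.single_apply]
  have hHc : Continuous hessV := by
    apply continuous_matrix
    intro i j
    have he : (fun x => hessV x i j) = fun x => (fderiv ℝ gradV x) (Pi.single j 1) i :=
      funext fun x => hentry x i j
    rw [he]
    exact (continuous_apply i).comp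
      ((hg2.continuous_fderiv (by norm_num)).clm_apply continuous_const)
  -- regularity of q and q'
  have hUo : IsOpen (Set.Ioo (-T) T) := isOpen_Ioo
  have hdq : DifferentiableOn ℝ q (Set.Ioo (-T) T) :=
    fun t ht => ((hq t ht).differentiableAt).differentiableWithinAt
  have hdq' : DifferentiableOn ℝ q' (Set.Ioo (-T) T) :=
    fun t ht => ((hq' t ht).differentiableAt).differentiableWithinAt
  have hderq : ∀ t ∈ Set.Ioo (-T) T, deriv q t = q' t := fun t ht => (hq t ht).deriv
  have hderq' : ∀ t ∈ Set.Ioo (-T) T, deriv q' t = -(gradV (q t)) :=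
    fun t ht => (hq' t ht).deriv
  have hq'1 : ContDiffOn ℝ 1 q' (Set.Ioo (-T) T) := by
    rw [show ((1 : WithTop ℕ∞)) = 0 + 1 by norm_num, contDiffOn_succ_iff_deriv_of_isOpen hUo]
    refine ⟨hdq', by simp, ?_⟩
    refine ContDiffOn.congr ?_ hderq'
    exact ((hg2.of_le (by norm_num)).comp_contDiffOn
      (contDiffOn_zero.mpr hdq.continuousOn)).neg
  have hq2 : ContDiffOn ℝ 2 q (Set.Ioo (-T) T) := by
    rw [show ((2 : WithTop ℕ∞)) = 1 + 1 by norm_num, contDiffOn_succ_iff_deriv_of_isOpen hUo]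
    exact ⟨hdq, by simp, ContDiffOn.congr hq'1 hderq⟩
  have hq'3 : ContDiffOn ℝ 3 q' (Set.Ioo (-T) T) := by
    rw [show ((3 : WithTop ℕ∞)) = 2 + 1 by norm_num, contDiffOn_succ_iff_deriv_of_isOpen hUo]
    exact ⟨hdq', by simp, ContDiffOn.congr (((hg2.comp_contDiffOn hq2)).neg) hderq'⟩
  have hq3 : ContDiffOn ℝ 3 q (Set.Ioo (-T) T) := by
    rw [show ((3 : WithTop ℕ∞)) = 2 + 1 by norm_num, contDiffOn_succ_iff_deriv_of_isOpen hUo]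
    exact ⟨hdq, by simp, ContDiffOn.congr (hq'3.of_le (by norm_num)) hderq⟩
  -- Taylor expansions on [0, T/2]
  have hδq : (0:ℝ) < T/2 := by linarith
  have hsubq : Set.Icc (0:ℝ) (T/2) ⊆ Set.Ioo (-T) T := by
    intro t ht
    exact ⟨by linarith [ht.1], by linarith [ht.2]⟩
  obtain ⟨Kq, hKq0, hKq⟩ := taylor2_bound' q q' (fun t => -(gradV (q t))) (T/2) hδq
    (hq3.mono hsubq) (fun t ht => hq t (hsubq ht)) (fun t ht => hq' t (hsubq ht))
  simp only [hq0, hq'0] at hKq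
  obtain ⟨Kq', hKq'0, hKq'⟩ := taylor2_bound' q' (fun t => -(gradV (q t)))
    (fun t => -(fderiv ℝ gradV (q t) (q' t))) (T/2) hδq
    (hq'3.mono hsubq) (fun t ht => hq' t (hsubq ht))
    (fun t ht =>
      ((hg2.differentiable (by norm_num) (q t)).hasFDerivAt.comp_hasDerivAt t
        (hq t (hsubq ht))).neg)
  simp only [hq0, hq'0] at hKq'
  -- matrix inverse blocks
  have hM₀c : Continuous (fun h : ℝ =>
      (1 : Matrix (Fin n) (Fin n) ℝ) + (β * h ^ 2) • hessV x₀) :=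
    continuous_const.add ((continuous_const.mul (continuous_pow 2)).smul continuous_const)
  obtain ⟨δ₁, hδ₁, _, K₁, hK₁0, hbd₁, hcont₁⟩ := inv_block' 1 one_pos
    (fun h : ℝ => (1 : Matrix (Fin n) (Fin n) ℝ) + (β * h ^ 2) • hessV x₀)
    hM₀c.continuousOn (by simp) (fun _ => gradV x₀) continuousOn_const
  have ha₀d : ∀ h : ℝ, a₀ h =
      -(((1 : Matrix (Fin n) (Fin n) ℝ) + (β * h ^ 2) • hessV x₀)⁻¹.mulVec (gradV x₀)) :=
    fun h => rfl
  have hbda₀ : ∀ h ∈ Set.Icc (0:ℝ) δ₁, ‖a₀ h‖ ≤ K₁ := by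
    intro h hh
    rw [ha₀d, norm_neg]
    exact (hbd₁ h hh).2
  have hconta₀ : ContinuousOn a₀ (Set.Icc 0 δ₁) := hcont₁.neg
  obtain ⟨δ₂, hδ₂, hδ₂le, K₂, hK₂0, hbd₂, _⟩ := inv_block' δ₁ hδ₁
    (fun h : ℝ => (1 : Matrix (Fin n) (Fin n) ℝ) + (β * h ^ 2) • hessV x₀)
    hM₀c.continuousOn (by simp)
    (fun _ => (hessV x₀).mulVec (gradV x₀)) continuousOn_const
  have hx₁d : ∀ h : ℝ, x₁ h = x₀ + h • v₀ + (h ^ 2 / 2) • a₀ h := fun h => rfl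
  have hx₁c : ContinuousOn x₁ (Set.Icc 0 δ₁) :=
    (continuousOn_const.add (continuousOn_id.smul continuousOn_const)).add
      (((continuous_pow 2).div_const 2).continuousOn.smul hconta₀)
  obtain ⟨δ₃, hδ₃, hδ₃le, K₃, hK₃0, hbd₃, _⟩ := inv_block' δ₁ hδ₁
    (fun h : ℝ => (1 : Matrix (Fin n) (Fin n) ℝ) + (β * h ^ 2) • hessV (x₁ h))
    (continuousOn_const.add
      (((continuous_const.mul (continuous_pow 2)).continuousOn).smul
        (hHc.comp_continuousOn hx₁c)))
    (by simp)
    (fun h => (hessV (x₁ h)).mulVec (gradV (x₁ h)))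
    (contOn_mulVec' _ _ (hHc.comp_continuousOn hx₁c)
      (hg2.continuous.comp_continuousOn hx₁c))
  -- quadratic Taylor bound for the gradient
  obtain ⟨r, hr, KQ, hKQ0, hquad⟩ := quad_bound' gradV hg2 x₀
  -- constants
  have hKv0 : (0:ℝ) ≤ ‖v₀‖ + K₁ := add_nonneg (norm_nonneg _) hK₁0
  set Kv : ℝ := ‖v₀‖ + K₁ with hKvdef
  set DgN : ℝ := ‖fderiv ℝ gradV x₀‖ with hDgNdef
  have hDgN0 : 0 ≤ DgN := norm_nonneg _
  set C : ℝ := Kq + Kq' + |β| * (K₂ + K₃) + KQ * Kv ^ 2 + DgN * K₁ + 1 with hCdef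
  have hC0 : 0 < C := by
    have h1 : 0 ≤ |β| * (K₂ + K₃) := mul_nonneg (abs_nonneg β) (add_nonneg hK₂0 hK₃0)
    have h2 : 0 ≤ KQ * Kv ^ 2 := mul_nonneg hKQ0 (sq_nonneg Kv)
    have h3 : 0 ≤ DgN * K₁ := mul_nonneg hDgN0 hK₁0
    rw [hCdef]; linarith
  clear_value Kv DgN C
  have hh₀pos : 0 < min (min (T/2) δ₂) (min (min δ₃ 1) (r / (Kv + 1))) :=
    lt_min (lt_min hδq hδ₂) (lt_min (lt_min hδ₃ one_pos) (div_pos hr (by linarith)))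
  refine ⟨C, hC0, min (min (T/2) δ₂) (min (min δ₃ 1) (r / (Kv + 1))), hh₀pos,
    fun h hpos hle => ?_⟩
  -- memberships
  have hhq : h ∈ Set.Icc (0:ℝ) (T/2) :=
    ⟨hpos.le, hle.trans ((min_le_left _ _).trans (min_le_left _ _))⟩
  have hh2 : h ∈ Set.Icc (0:ℝ) δ₂ :=
    ⟨hpos.le, hle.trans ((min_le_left _ _).trans (min_le_right _ _))⟩
  have hh3 : h ∈ Set.Icc (0:ℝ) δ₃ :=
    ⟨hpos.le, hle.trans ((min_le_right _ _).trans ((min_le_left _ _).trans (min_le_left _ _)))⟩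
  have hh1le : h ≤ 1 :=
    hle.trans ((min_le_right _ _).trans ((min_le_left _ _).trans (min_le_right _ _)))
  have hhr : h ≤ r / (Kv + 1) :=
    hle.trans ((min_le_right _ _).trans (min_le_right _ _))
  have hh1' : h ∈ Set.Icc (0:ℝ) δ₁ := ⟨hpos.le, hh2.2.trans hδ₂le⟩
  -- invertibility
  have hu₀ : IsUnit ((1 : Matrix (Fin n) (Fin n) ℝ) + (β * h ^ 2) • hessV x₀) :=
    (hbd₂ h hh2).1
  have hu₁ : IsUnit ((1 : Matrix (Fin n) (Fin n) ℝ) + (β * h ^ 2) • hessV (x₁ h)) :=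
    (hbd₃ h hh3).1
  refine ⟨hu₀, hu₁, ?_, ?_⟩
  case _ =>
    -- key identities
    have hida₀ : a₀ h + gradV x₀ = (β * h ^ 2) •
        (((1 : Matrix (Fin n) (Fin n) ℝ) + (β * h ^ 2) • hessV x₀)⁻¹.mulVec
          ((hessV x₀).mulVec (gradV x₀))) :=
      inv_identity' (β * h ^ 2) (hessV x₀) (gradV x₀) hu₀
    have hna₀ : ‖a₀ h + gradV x₀‖ ≤ |β| * h ^ 2 * K₂ := by
      rw [hida₀, norm_smul, Real.norm_eq_abs, abs_mul, abs_of_nonneg (sq_nonneg h)]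
      exact mul_le_mul_of_nonneg_left ((hbd₂ h hh2).2) (by positivity)
    have hposdec : q h - x₁ h
        = (q h - (x₀ + h • v₀ + (h ^ 2 / 2) • -gradV x₀))
          - (h ^ 2 / 2) • (a₀ h + gradV x₀) := by
      rw [hx₁d]; module
    have e1 := hKq h hhq
    have hb4 : h ^ 4 ≤ h ^ 3 := pow_le_pow_of_le_one hpos.le hh1le (by norm_num)
    calc ‖q h - x₁ h‖
        = ‖(q h - (x₀ + h • v₀ + (h ^ 2 / 2) • -gradV x₀))
            - (h ^ 2 / 2) • (a₀ h + gradV x₀)‖ := by rw [hposdec]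
      _ ≤ ‖q h - (x₀ + h • v₀ + (h ^ 2 / 2) • -gradV x₀)‖
            + ‖(h ^ 2 / 2) • (a₀ h + gradV x₀)‖ := norm_sub_le _ _
      _ ≤ Kq * h ^ 3 + (h ^ 2 / 2) * (|β| * h ^ 2 * K₂) := by
          refine add_le_add e1 ?_
          rw [norm_smul, Real.norm_eq_abs, abs_of_nonneg (by positivity : (0:ℝ) ≤ h ^ 2 / 2)]
          exact mul_le_mul_of_nonneg_left hna₀ (by positivity)
      _ = Kq * h ^ 3 + |β| * K₂ / 2 * h ^ 4 := by ring
      _ ≤ Kq * h ^ 3 + |β| * K₂ / 2 * h ^ 3 := by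
          have := mul_le_mul_of_nonneg_left hb4
            (show (0:ℝ) ≤ |β| * K₂ / 2 by positivity)
          linarith
      _ = (Kq + |β| * K₂ / 2) * h ^ 3 := by ring
      _ ≤ C * h ^ 3 := by
          refine mul_le_mul_of_nonneg_right ?_ (pow_nonneg hpos.le 3)
          have l1 : 0 ≤ |β| * K₂ := mul_nonneg (abs_nonneg β) hK₂0
          have l2 : 0 ≤ |β| * K₃ := mul_nonneg (abs_nonneg β) hK₃0
          have l3 : 0 ≤ KQ * Kv ^ 2 := mul_nonneg hKQ0 (sq_nonneg Kv)
          have l4 : 0 ≤ DgN * K₁ := mul_nonneg hDgN0 hK₁0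
          have l5 : |β| * (K₂ + K₃) = |β| * K₂ + |β| * K₃ := by ring
          rw [hCdef]
          linarith
  case _ =>
    -- velocity error
    have hida₀ : a₀ h + gradV x₀ = (β * h ^ 2) •
        (((1 : Matrix (Fin n) (Fin n) ℝ) + (β * h ^ 2) • hessV x₀)⁻¹.mulVec
          ((hessV x₀).mulVec (gradV x₀))) :=
      inv_identity' (β * h ^ 2) (hessV x₀) (gradV x₀) hu₀
    have hna₀ : ‖a₀ h + gradV x₀‖ ≤ |β| * h ^ 2 * K₂ := by
      rw [hida₀, norm_smul, Real.norm_eq_abs, abs_mul, abs_of_nonneg (sq_nonneg h)]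
      exact mul_le_mul_of_nonneg_left ((hbd₂ h hh2).2) (by positivity)
    have hida₁ : a₁ h + gradV (x₁ h) = (β * h ^ 2) •
        (((1 : Matrix (Fin n) (Fin n) ℝ) + (β * h ^ 2) • hessV (x₁ h))⁻¹.mulVec
          ((hessV (x₁ h)).mulVec (gradV (x₁ h)))) :=
      inv_identity' (β * h ^ 2) (hessV (x₁ h)) (gradV (x₁ h)) hu₁
    have hna₁ : ‖a₁ h + gradV (x₁ h)‖ ≤ |β| * h ^ 2 * K₃ := by
      rw [hida₁, norm_smul, Real.norm_eq_abs, abs_mul, abs_of_nonneg (sq_nonneg h)]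
      exact mul_le_mul_of_nonneg_left ((hbd₃ h hh3).2) (by positivity)
    -- distance of x₁ h from x₀
    have hx₁sub : x₁ h - x₀ = h • v₀ + (h ^ 2 / 2) • a₀ h := by
      rw [hx₁d]; abel
    have hsq : h ^ 2 / 2 ≤ h := by
      have h2 : h ^ 2 ≤ h ^ 1 := pow_le_pow_of_le_one hpos.le hh1le one_le_two
      rw [pow_one] at h2
      linarith
    have hx₁dist : ‖x₁ h - x₀‖ ≤ Kv * h := by
      rw [hx₁sub]
      have hb := hbda₀ h hh1'
      calc ‖h • v₀ + (h ^ 2 / 2) • a₀ h‖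
          ≤ ‖h • v₀‖ + ‖(h ^ 2 / 2) • a₀ h‖ := norm_add_le _ _
        _ = h * ‖v₀‖ + (h ^ 2 / 2) * ‖a₀ h‖ := by
            rw [norm_smul, norm_smul, Real.norm_eq_abs, Real.norm_eq_abs,
              abs_of_nonneg hpos.le, abs_of_nonneg (by positivity : (0:ℝ) ≤ h ^ 2 / 2)]
        _ ≤ h * ‖v₀‖ + h * K₁ := by
            refine add_le_add le_rfl ?_
            calc (h ^ 2 / 2) * ‖a₀ h‖ ≤ (h ^ 2 / 2) * K₁ :=
                  mul_le_mul_of_nonneg_left hb (by positivity)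
              _ ≤ h * K₁ := mul_le_mul_of_nonneg_right hsq hK₁0
        _ = Kv * h := by rw [hKvdef]; ring
    have hKvh : Kv * h ≤ r := by
      rw [le_div_iff₀ (by linarith : (0:ℝ) < Kv + 1)] at hhr
      calc Kv * h ≤ Kv * h + h := by linarith
        _ = h * (Kv + 1) := by ring
        _ ≤ r := hhr
    have hxr : ‖x₁ h - x₀‖ ≤ r := hx₁dist.trans hKvh
    have hqb : ‖gradV (x₁ h) - gradV x₀ - fderiv ℝ gradV x₀ (x₁ h - x₀)‖
        ≤ KQ * (Kv * h) ^ 2 := by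
      refine (hquad (x₁ h) hxr).trans ?_
      exact mul_le_mul_of_nonneg_left (pow_le_pow_left₀ (norm_nonneg _) hx₁dist 2) hKQ0
    have hDglin : fderiv ℝ gradV x₀ (x₁ h - x₀)
        = h • fderiv ℝ gradV x₀ v₀ + (h ^ 2 / 2) • fderiv ℝ gradV x₀ (a₀ h) := by
      rw [hx₁sub, map_add, _root_.map_smul, _root_.map_smul]
    have hR : a₁ h + gradV x₀ + h • (fderiv ℝ gradV x₀ v₀)
        = -(gradV (x₁ h) - gradV x₀ - fderiv ℝ gradV x₀ (x₁ h - x₀))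
          - (h ^ 2 / 2) • (fderiv ℝ gradV x₀ (a₀ h)) + (a₁ h + gradV (x₁ h)) := by
      rw [hDglin]; module
    have hD2 : ‖fderiv ℝ gradV x₀ (a₀ h)‖ ≤ DgN * K₁ := by
      refine (ContinuousLinearMap.le_opNorm _ _).trans ?_
      rw [hDgNdef]
      exact mul_le_mul_of_nonneg_left (hbda₀ h hh1') (norm_nonneg _)
    have hRnorm : ‖a₁ h + gradV x₀ + h • (fderiv ℝ gradV x₀ v₀)‖
        ≤ KQ * (Kv * h) ^ 2 + (h ^ 2 / 2) * (DgN * K₁) + |β| * h ^ 2 * K₃ := by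
      rw [hR]
      refine (norm_add_le _ _).trans ?_
      refine add_le_add ((norm_sub_le _ _).trans (add_le_add ?_ ?_)) hna₁
      · rw [norm_neg]; exact hqb
      · rw [norm_smul, Real.norm_eq_abs, abs_of_nonneg (by positivity : (0:ℝ) ≤ h ^ 2 / 2)]
        exact mul_le_mul_of_nonneg_left hD2 (by positivity)
    have hv₁d : v₁ h = v₀ + (h / 2) • (a₀ h + a₁ h) := rfl
    have hveldec : q' h - v₁ h
        = (q' h - (v₀ + h • -gradV x₀ + (h ^ 2 / 2) • -(fderiv ℝ gradV x₀ v₀)))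
          - (h / 2) • ((a₀ h + gradV x₀)
            + (a₁ h + gradV x₀ + h • (fderiv ℝ gradV x₀ v₀))) := by
      rw [hv₁d]; module
    have e2 := hKq' h hhq
    calc ‖q' h - v₁ h‖
        = ‖(q' h - (v₀ + h • -gradV x₀ + (h ^ 2 / 2) • -(fderiv ℝ gradV x₀ v₀)))
            - (h / 2) • ((a₀ h + gradV x₀)
              + (a₁ h + gradV x₀ + h • (fderiv ℝ gradV x₀ v₀)))‖ := by rw [hveldec]
      _ ≤ ‖q' h - (v₀ + h • -gradV x₀ + (h ^ 2 / 2) • -(fderiv ℝ gradV x₀ v₀))‖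
            + (h / 2) * ‖(a₀ h + gradV x₀)
              + (a₁ h + gradV x₀ + h • (fderiv ℝ gradV x₀ v₀))‖ := by
          refine (norm_sub_le _ _).trans ?_
          rw [norm_smul, Real.norm_eq_abs, abs_of_nonneg (by positivity : (0:ℝ) ≤ h / 2)]
      _ ≤ Kq' * h ^ 3 + (h / 2) * ((|β| * h ^ 2 * K₂)
            + (KQ * (Kv * h) ^ 2 + (h ^ 2 / 2) * (DgN * K₁) + |β| * h ^ 2 * K₃)) := by
          refine add_le_add e2 ?_
          refine mul_le_mul_of_nonneg_left ?_ (by positivity)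
          exact (norm_add_le _ _).trans (add_le_add hna₀ hRnorm)
      _ = (Kq' + |β| * K₂ / 2 + KQ * Kv ^ 2 / 2 + |β| * K₃ / 2 + DgN * K₁ / 4) * h ^ 3 := by
          ring
      _ ≤ C * h ^ 3 := by
          refine mul_le_mul_of_nonneg_right ?_ (pow_nonneg hpos.le 3)
          have l1 : 0 ≤ |β| * K₂ := mul_nonneg (abs_nonneg β) hK₂0
          have l2 : 0 ≤ |β| * K₃ := mul_nonneg (abs_nonneg β) hK₃0
          have l3 : 0 ≤ KQ * Kv ^ 2 := mul_nonneg hKQ0 (sq_nonneg Kv)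
          have l4 : 0 ≤ DgN * K₁ := mul_nonneg hDgN0 hK₁0
          have l5 : |β| * (K₂ + K₃) = |β| * K₂ + |β| * K₃ := by ring
          rw [hCdef]
          linarith
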